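/- arXiv:1710.07007 — 2 statements merged into one kernel-verified Lean document; each statement's English description precedes it below -/
import Mathlib

section
/- Let w be a Baxter permutation of length n and let w' of length n+1 be obtained by inserting a new largest label n+1 at a position p such that w' is again a Baxter permutation. Then des(w') − ides(w') = des(w) − ides(w), where des denotes the number of descents and ides the number of inverse descents. More precisely, if p ≤ n and w(p) is a left-to-right maximum of w then des(w') = des(w)+1 and ides(w') = ides(w)+1, while if p ≥ 2 and w(p−1) is a right-to-left maximum of w then des(w') = des(w) and ides(w') = ides(w). -/
/-- The entry of the word `l` at (1-indexed) position `i`, i.e. `w(i)`. -/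
def entry (l : List ℕ) (i : ℕ) : ℕ := l.getD (i - 1) 0

/-- `l` is the one-line notation of a permutation of `{1,…,n}`. -/
def IsPermWord (n : ℕ) (l : List ℕ) : Prop := l.Perm (List.range' 1 n)

/-- `l` is a Baxter permutation of length `n`: a permutation of `{1,…,n}`
avoiding the vincular patterns 3-14-2 and 2-41-3. -/
def IsBaxter (n : ℕ) (l : List ℕ) : Prop :=
  IsPermWord n l ∧
  (¬ ∃ i j k, 1 ≤ i ∧ i < j ∧ j + 1 < k ∧ k ≤ n ∧
      entry l j < entry l k ∧ entry l k < entry l i ∧ entry l i < entry l (j + 1)) ∧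
  (¬ ∃ i j k, 1 ≤ i ∧ i < j ∧ j + 1 < k ∧ k ≤ n ∧
      entry l (j + 1) < entry l i ∧ entry l i < entry l k ∧ entry l k < entry l j)

/-- `l` is fixed under quarter-turn (90°) rotation of its permutation matrix:
`w(w(i)) = n+1-i` for all `i ∈ {1,…,n}`. -/
def QuarterFixed (n : ℕ) (l : List ℕ) : Prop :=
  ∀ i, 1 ≤ i → i ≤ n → entry l (entry l i) = n + 1 - i

/-- `l` is fixed under half-turn (180°) rotation of its permutation matrix:
`w(n+1-i) = n+1-w(i)` for all `i ∈ {1,…,n}`. -/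
def HalfFixed (n : ℕ) (l : List ℕ) : Prop :=
  ∀ i, 1 ≤ i → i ≤ n → entry l (n + 1 - i) = n + 1 - entry l i

/-- The entry at position `i` is a left-to-right maximum. -/
def LRMaxAt (l : List ℕ) (i : ℕ) : Prop := ∀ k, 1 ≤ k → k < i → entry l k < entry l i

/-- The entry at position `i` is a right-to-left maximum. -/
def RLMaxAt (n : ℕ) (l : List ℕ) (i : ℕ) : Prop := ∀ k, i < k → k ≤ n → entry l k < entry l i

/-- The entry at position `i` is a left-to-right minimum. -/
def LRMinAt (l : List ℕ) (i : ℕ) : Prop := ∀ k, 1 ≤ k → k < i → entry l i < entry l k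

/-- The entry at position `i` is a right-to-left minimum. -/
def RLMinAt (n : ℕ) (l : List ℕ) (i : ℕ) : Prop := ∀ k, i < k → k ≤ n → entry l i < entry l k

/-- The (1-indexed) position of the value `v` in `l`, i.e. `w⁻¹(v)`. -/
def pos (l : List ℕ) (v : ℕ) : ℕ := l.idxOf v + 1

/-- The one-line notation of the inverse of the permutation `l` of `{1,…,n}`. -/
def invWord (n : ℕ) (l : List ℕ) : List ℕ := (List.range' 1 n).map (pos l)

/-- The number of descents of a permutation word of length `n`:
indices `i ∈ {1,…,n-1}` with `w(i) > w(i+1)`. -/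
noncomputable def des (n : ℕ) (l : List ℕ) : ℕ :=
  {i : ℕ | 1 ≤ i ∧ i + 1 ≤ n ∧ entry l (i + 1) < entry l i}.ncard

/-- Insert a new largest label `n+1` at (1-indexed) position `p`
in the permutation `l` of `{1,…,n}`. -/
def insertMax (n p : ℕ) (l : List ℕ) : List ℕ := l.insertIdx (p - 1) (n + 1)

/-- Insert a new smallest label `1` at (1-indexed) position `p`
(all old labels get increased by 1). -/
def insertMin (p : ℕ) (l : List ℕ) : List ℕ := (l.map (· + 1)).insertIdx (p - 1) 1

/-- Append the value `j` at the end of the permutation `l`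
(old labels `≥ j` get increased by 1). -/
def appendEnd (j : ℕ) (l : List ℕ) : List ℕ :=
  (l.map (fun x => if x < j then x else x + 1)) ++ [j]

/-- Standardize a word with distinct entries: replace the entries by `1,…,m` preserving
relative order (each entry is replaced by the number of entries less than or equal to it). -/
def standardize (l : List ℕ) : List ℕ := l.map (fun x => (l.filter (fun y => y ≤ x)).length)

lemma bx_mem_range1 {n x : ℕ} : x ∈ List.range' 1 n ↔ 1 ≤ x ∧ x ≤ n := by
  rw [List.mem_range']
  constructor
  · rintro ⟨i, hi, rfl⟩; omega
  · rintro ⟨h1, h2⟩; exact ⟨x - 1, by omega, by omega⟩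

lemma bx_len {n : ℕ} {l : List ℕ} (hl : IsPermWord n l) : l.length = n := by
  simpa using hl.length_eq

lemma bx_nodup {n : ℕ} {l : List ℕ} (hl : IsPermWord n l) : l.Nodup :=
  hl.nodup_iff.2 List.nodup_range'

lemma bx_mem {n : ℕ} {l : List ℕ} (hl : IsPermWord n l) {x : ℕ} :
    x ∈ l ↔ 1 ≤ x ∧ x ≤ n := by
  rw [hl.mem_iff, bx_mem_range1]

lemma bx_entry_eq {n : ℕ} {l : List ℕ} (hl : IsPermWord n l) (i : ℕ)
    (h1 : 1 ≤ i) (h2 : i ≤ n) :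
    entry l i = l[i - 1]'(by rw [bx_len hl]; omega) :=
  List.getD_eq_getElem _ _ _

lemma bx_entry_bound {n : ℕ} {l : List ℕ} (hl : IsPermWord n l) (i : ℕ)
    (h1 : 1 ≤ i) (h2 : i ≤ n) :
    1 ≤ entry l i ∧ entry l i ≤ n := by
  rw [bx_entry_eq hl i h1 h2]
  exact (bx_mem hl).1 (List.getElem_mem _)

lemma bx_entry_inj {n : ℕ} {l : List ℕ} (hl : IsPermWord n l) (i j : ℕ)
    (h1 : 1 ≤ i) (h2 : i ≤ n) (h3 : 1 ≤ j) (h4 : j ≤ n) (hij : i ≠ j) :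
    entry l i ≠ entry l j := by
  rw [bx_entry_eq hl i h1 h2, bx_entry_eq hl j h3 h4]
  intro h
  have := ((bx_nodup hl).getElem_inj_iff).1 h
  omega

lemma bx_pos_eq {n : ℕ} {l : List ℕ} (hl : IsPermWord n l) (j v : ℕ)
    (h1 : 1 ≤ j) (h2 : j ≤ n) (hv : entry l j = v) : pos l v = j := by
  rw [bx_entry_eq hl j h1 h2] at hv
  have hmem : v ∈ l := hv ▸ List.getElem_mem _
  have hlt : l.idxOf v < l.length := List.idxOf_lt_length_iff.2 hmem
  have h := List.getElem_idxOf hlt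
  have := ((bx_nodup hl).getElem_inj_iff).1 (h.trans hv.symm)
  unfold pos; omega

lemma bx_entry_pos {n : ℕ} {l : List ℕ} (hl : IsPermWord n l) (v : ℕ)
    (h1 : 1 ≤ v) (h2 : v ≤ n) :
    entry l (pos l v) = v ∧ 1 ≤ pos l v ∧ pos l v ≤ n := by
  have hmem : v ∈ l := (bx_mem hl).2 ⟨h1, h2⟩
  have hlt : l.idxOf v < l.length := List.idxOf_lt_length_iff.2 hmem
  have hlt' : l.idxOf v < n := by rwa [bx_len hl] at hlt
  have h := List.getElem_idxOf hlt
  refine ⟨?_, by unfold pos; omega, by unfold pos; omega⟩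
  unfold entry
  rw [show pos l v - 1 = l.idxOf v from by unfold pos; omega]
  rw [List.getD_eq_getElem _ _ hlt]
  exact h

lemma bx_lenL {n p : ℕ} {l : List ℕ} (hl : IsPermWord n l) (hp2 : p ≤ n + 1) :
    (insertMax n p l).length = n + 1 := by
  have hlen := bx_len hl
  unfold insertMax
  rw [List.length_insertIdx_of_le_length (by omega)]
  omega

lemma bx_entryL_lt {n p : ℕ} {l : List ℕ} (hl : IsPermWord n l) (hp2 : p ≤ n + 1)
    (i : ℕ) (h1 : 1 ≤ i) (h2 : i < p) :
    entry (insertMax n p l) i = entry l i := by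
  have hlen := bx_len hl
  have hplen : p - 1 ≤ l.length := by omega
  unfold entry insertMax
  rw [List.getD_eq_getElem _ _ (by rw [List.length_insertIdx_of_le_length hplen]; omega),
      List.getD_eq_getElem _ _ (by omega)]
  exact List.getElem_insertIdx_of_lt (l := l) (x := n + 1) (i := p - 1) (j := i - 1) (by omega) _

lemma bx_entryL_self {n p : ℕ} {l : List ℕ} (hl : IsPermWord n l)
    (hp1 : 1 ≤ p) (hp2 : p ≤ n + 1) :
    entry (insertMax n p l) p = n + 1 := by
  have hlen := bx_len hl
  have hplen : p - 1 ≤ l.length := by omega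
  unfold entry insertMax
  rw [List.getD_eq_getElem _ _ (by rw [List.length_insertIdx_of_le_length hplen]; omega)]
  exact List.getElem_insertIdx_self _

lemma bx_entryL_gt {n p : ℕ} {l : List ℕ} (hl : IsPermWord n l)
    (hp1 : 1 ≤ p) (hp2 : p ≤ n + 1)
    (i : ℕ) (h2 : p < i) (h3 : i ≤ n + 1) :
    entry (insertMax n p l) i = entry l (i - 1) := by
  have hlen := bx_len hl
  have hplen : p - 1 ≤ l.length := by omega
  unfold entry insertMax
  rw [show i - 1 - 1 = (p - 1) + (i - p - 1) from by omega,
      show i - 1 = (p - 1) + (i - p - 1) + 1 from by omega,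
      List.getD_eq_getElem _ _ (by rw [List.length_insertIdx_of_le_length hplen]; omega),
      List.getD_eq_getElem _ _ (by omega)]
  exact List.getElem_insertIdx_add_succ l (n + 1) (p - 1) (i - p - 1) (by omega)

lemma bx_posL_new {n p : ℕ} {l : List ℕ} (hl : IsPermWord n l)
    (hL : IsPermWord (n + 1) (insertMax n p l)) (hp1 : 1 ≤ p) (hp2 : p ≤ n + 1) :
    pos (insertMax n p l) (n + 1) = p :=
  bx_pos_eq hL p (n + 1) hp1 hp2 (bx_entryL_self hl hp1 hp2)

lemma bx_posL_old {n p : ℕ} {l : List ℕ} (hl : IsPermWord n l)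
    (hL : IsPermWord (n + 1) (insertMax n p l)) (hp1 : 1 ≤ p) (hp2 : p ≤ n + 1)
    (v : ℕ) (h1 : 1 ≤ v) (h2 : v ≤ n) :
    pos (insertMax n p l) v = if pos l v < p then pos l v else pos l v + 1 := by
  obtain ⟨he, hq1, hq2⟩ := bx_entry_pos hl v h1 h2
  split_ifs with h
  · exact bx_pos_eq hL _ _ hq1 (by omega) ((bx_entryL_lt hl hp2 _ hq1 h).trans he)
  · refine bx_pos_eq hL _ _ (by omega) (by omega) ?_
    rw [bx_entryL_gt hl hp1 hp2 _ (by omega) (by omega),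
        show pos l v + 1 - 1 = pos l v from by omega]
    exact he

lemma bx_entry_inv (m : ℕ) (l : List ℕ) (i : ℕ) (h1 : 1 ≤ i) (h2 : i ≤ m) :
    entry (invWord m l) i = pos l i := by
  unfold entry invWord
  rw [List.getD_eq_getElem _ _ (by simp; omega)]
  rw [List.getElem_map]
  congr 1
  rw [List.getElem_range']
  omega

lemma bx_des_card (m : ℕ) (l : List ℕ) :
    des m l = ((Finset.Ico 1 m).filter (fun i => entry l (i + 1) < entry l i)).card := by
  have h : {i : ℕ | 1 ≤ i ∧ i + 1 ≤ m ∧ entry l (i + 1) < entry l i}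
      = ↑((Finset.Ico 1 m).filter (fun i => entry l (i + 1) < entry l i)) := by
    ext i
    simp only [Set.mem_setOf_eq, Finset.coe_filter, Finset.mem_Ico]
    constructor
    · rintro ⟨a, b, c⟩; exact ⟨⟨a, by omega⟩, c⟩
    · rintro ⟨⟨a, b⟩, c⟩; exact ⟨a, by omega, c⟩
  unfold des
  rw [h, Set.ncard_coe_finset]

lemma bx_desL {n p : ℕ} {l : List ℕ} (hl : IsPermWord n l) (hp1 : 1 ≤ p) (hp2 : p ≤ n + 1) :
    des (n + 1) (insertMax n p l)
        + (if 2 ≤ p ∧ p ≤ n ∧ entry l p < entry l (p - 1) then 1 else 0)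
      = des n l + (if p ≤ n then 1 else 0) := by
  set D : Finset ℕ := (Finset.Ico 1 n).filter (fun i => entry l (i + 1) < entry l i) with hD
  set D1 : Finset ℕ := D.filter (fun i => i + 1 < p) with hD1
  set D2 : Finset ℕ := (D.filter (fun i => p ≤ i)).image (· + 1) with hD2
  set E : Finset ℕ := if p ≤ n then ({p} : Finset ℕ) else ∅ with hE
  have hmemD : ∀ i, i ∈ D ↔ 1 ≤ i ∧ i + 1 ≤ n ∧ entry l (i + 1) < entry l i := by
    intro i
    rw [hD]
    simp only [Finset.mem_filter, Finset.mem_Ico]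
    constructor
    · rintro ⟨⟨a, b⟩, c⟩; exact ⟨a, by omega, c⟩
    · rintro ⟨a, b, c⟩; exact ⟨⟨a, by omega⟩, c⟩
  have hmemD1 : ∀ i, i ∈ D1 ↔ i ∈ D ∧ i + 1 < p := by
    intro i; rw [hD1, Finset.mem_filter]
  have hmemD2 : ∀ i, i ∈ D2 ↔ ∃ j, (j ∈ D ∧ p ≤ j) ∧ j + 1 = i := by
    intro i; rw [hD2]
    simp only [Finset.mem_image, Finset.mem_filter]
  have hmemE : ∀ i, i ∈ E ↔ p ≤ n ∧ i = p := by
    intro i; rw [hE]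
    split_ifs with h
    · simp [h]
    · simp [h]
  have hA : (Finset.Ico 1 (n + 1)).filter
        (fun i => entry (insertMax n p l) (i + 1) < entry (insertMax n p l) i)
      = D1 ∪ D2 ∪ E := by
    ext i
    simp only [Finset.mem_filter, Finset.mem_Ico, Finset.mem_union, hmemD1, hmemD2, hmemE]
    constructor
    · rintro ⟨⟨h1, h2⟩, h3⟩
      rcases Nat.lt_trichotomy i p with hip | rfl | hip
      · by_cases hip1 : i + 1 < p
        · rw [bx_entryL_lt hl hp2 (i + 1) (by omega) hip1,
              bx_entryL_lt hl hp2 i h1 (by omega)] at h3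
          exact Or.inl (Or.inl ⟨(hmemD i).2 ⟨h1, by omega, h3⟩, hip1⟩)
        · exfalso
          have hieq : i + 1 = p := by omega
          rw [hieq, bx_entryL_self hl hp1 hp2,
              bx_entryL_lt hl hp2 i h1 (by omega)] at h3
          have := (bx_entry_bound hl i h1 (by omega)).2
          omega
      · exact Or.inr ⟨by omega, rfl⟩
      · refine Or.inl (Or.inr ?_)
        rw [bx_entryL_gt hl hp1 hp2 (i + 1) (by omega) (by omega),
            bx_entryL_gt hl hp1 hp2 i hip (by omega),
            show i + 1 - 1 = i from by omega] at h3
        refine ⟨i - 1, ⟨(hmemD _).2 ⟨by omega, by omega, ?_⟩, by omega⟩, by omega⟩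
        rw [show i - 1 + 1 = i from by omega]
        exact h3
    · rintro ((⟨hiD, hip⟩ | ⟨j, ⟨hjD, hpj⟩, rfl⟩) | ⟨hpn, hie⟩)
      · obtain ⟨a, b, c⟩ := (hmemD i).1 hiD
        refine ⟨⟨a, by omega⟩, ?_⟩
        rw [bx_entryL_lt hl hp2 (i + 1) (by omega) hip,
            bx_entryL_lt hl hp2 i a (by omega)]
        exact c
      · obtain ⟨a, b, c⟩ := (hmemD j).1 hjD
        refine ⟨⟨by omega, by omega⟩, ?_⟩
        rw [bx_entryL_gt hl hp1 hp2 (j + 1 + 1) (by omega) (by omega),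
            bx_entryL_gt hl hp1 hp2 (j + 1) (by omega) (by omega),
            show j + 1 + 1 - 1 = j + 1 from by omega,
            show j + 1 - 1 = j from by omega]
        exact c
      · refine ⟨⟨by omega, by omega⟩, ?_⟩
        rw [hie, bx_entryL_self hl hp1 hp2,
            bx_entryL_gt hl hp1 hp2 (p + 1) (by omega) (by omega),
            show p + 1 - 1 = p from by omega]
        have := (bx_entry_bound hl p hp1 hpn).2
        omega
  have hd12 : Disjoint D1 D2 := by
    rw [Finset.disjoint_left]
    intro a ha hb
    rw [hmemD1] at ha
    obtain ⟨j, ⟨_, hpj⟩, hji⟩ := (hmemD2 a).1 hb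
    omega
  have hd3 : Disjoint (D1 ∪ D2) E := by
    rw [Finset.disjoint_left]
    intro a ha hb
    obtain ⟨hpn, rfl⟩ := (hmemE a).1 hb
    rcases Finset.mem_union.1 ha with h | h
    · rw [hmemD1] at h; omega
    · obtain ⟨j, ⟨hj, hpj⟩, hji⟩ := (hmemD2 _).1 h; omega
  have hcard1 : des (n + 1) (insertMax n p l) = D1.card + D2.card + E.card := by
    rw [bx_des_card, hA, Finset.card_union_of_disjoint hd3,
        Finset.card_union_of_disjoint hd12]
  have hcard2 : D2.card = (D.filter (fun i => p ≤ i)).card := by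
    rw [hD2]
    exact Finset.card_image_of_injective _ (add_left_injective 1)
  have hcard3 : E.card = if p ≤ n then 1 else 0 := by
    rw [hE]; split_ifs <;> simp
  have hsplit2 : D.filter (fun i => ¬ i + 1 < p)
      = D.filter (fun i => i + 1 = p) ∪ D.filter (fun i => p ≤ i) := by
    ext a
    simp only [Finset.mem_filter, Finset.mem_union]
    constructor
    · rintro ⟨ha, hb⟩
      by_cases h : a + 1 = p
      · exact Or.inl ⟨ha, h⟩
      · exact Or.inr ⟨ha, by omega⟩
    · rintro (⟨ha, hb⟩ | ⟨ha, hb⟩) <;> exact ⟨ha, by omega⟩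
  have hd4 : Disjoint (D.filter (fun i => i + 1 = p)) (D.filter (fun i => p ≤ i)) := by
    rw [Finset.disjoint_left]
    intro a ha hb
    simp only [Finset.mem_filter] at ha hb
    omega
  have hsplit : D.card
      = D1.card + ((D.filter (fun i => i + 1 = p)).card + (D.filter (fun i => p ≤ i)).card) := by
    rw [← Finset.card_union_of_disjoint hd4, ← hsplit2, hD1]
    exact (Finset.card_filter_add_card_filter_not _).symm
  have hmid : (D.filter (fun i => i + 1 = p)).card
      = if 2 ≤ p ∧ p ≤ n ∧ entry l p < entry l (p - 1) then 1 else 0 := by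
    split_ifs with hc
    · have he : D.filter (fun i => i + 1 = p) = {p - 1} := by
        ext a
        simp only [Finset.mem_filter, Finset.mem_singleton]
        constructor
        · rintro ⟨haD, hb⟩
          have := (hmemD a).1 haD
          omega
        · rintro rfl
          refine ⟨(hmemD _).2 ⟨by omega, by omega, ?_⟩, by omega⟩
          rw [show p - 1 + 1 = p from by omega]
          exact hc.2.2
      rw [he]; simp
    · have he : D.filter (fun i => i + 1 = p) = ∅ := by
        rw [Finset.eq_empty_iff_forall_notMem]
        intro a ha
        simp only [Finset.mem_filter] at ha
        obtain ⟨haD, hap⟩ := ha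
        obtain ⟨a1, a2, a3⟩ := (hmemD a).1 haD
        apply hc
        refine ⟨by omega, by omega, ?_⟩
        rw [show p - 1 = a from by omega, show p = a + 1 from by omega]
        exact a3
      rw [he]; simp
  have e2 : des n l = D.card := by rw [hD]; exact bx_des_card n l
  rw [hcard1, e2, hsplit, hcard2, hcard3, hmid]
  omega

lemma bx_idesL {n p : ℕ} {l : List ℕ} (hl : IsPermWord n l)
    (hL : IsPermWord (n + 1) (insertMax n p l))
    (hp1 : 1 ≤ p) (hp2 : p ≤ n + 1) :
    des (n + 1) (invWord (n + 1) (insertMax n p l))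
      = des n (invWord n l) + (if 1 ≤ n ∧ p ≤ pos l n then 1 else 0) := by
  have key : ∀ i, 1 ≤ i → i + 1 ≤ n →
      (entry (invWord (n + 1) (insertMax n p l)) (i + 1)
          < entry (invWord (n + 1) (insertMax n p l)) i
        ↔ entry (invWord n l) (i + 1) < entry (invWord n l) i) := by
    intro i h1 h2
    rw [bx_entry_inv (n + 1) _ (i + 1) (by omega) (by omega),
        bx_entry_inv (n + 1) _ i h1 (by omega),
        bx_entry_inv n l (i + 1) (by omega) h2,
        bx_entry_inv n l i h1 (by omega),
        bx_posL_old hl hL hp1 hp2 (i + 1) (by omega) h2,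
        bx_posL_old hl hL hp1 hp2 i h1 (by omega)]
    split_ifs <;> omega
  have hlast : ∀ hn : 1 ≤ n,
      (entry (invWord (n + 1) (insertMax n p l)) (n + 1)
          < entry (invWord (n + 1) (insertMax n p l)) n
        ↔ p ≤ pos l n) := by
    intro hn
    rw [bx_entry_inv (n + 1) _ (n + 1) (by omega) (by omega),
        bx_entry_inv (n + 1) _ n (by omega) (by omega),
        bx_posL_new hl hL hp1 hp2,
        bx_posL_old hl hL hp1 hp2 n hn le_rfl]
    split_ifs with h <;> omega
  by_cases hc : 1 ≤ n ∧ p ≤ pos l n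
  · rw [if_pos hc]
    have hT' : (Finset.Ico 1 (n + 1)).filter
          (fun i => entry (invWord (n + 1) (insertMax n p l)) (i + 1)
            < entry (invWord (n + 1) (insertMax n p l)) i)
        = insert n ((Finset.Ico 1 n).filter
            (fun i => entry (invWord n l) (i + 1) < entry (invWord n l) i)) := by
      ext i
      simp only [Finset.mem_filter, Finset.mem_Ico, Finset.mem_insert]
      constructor
      · rintro ⟨⟨h1, h2⟩, h3⟩
        by_cases hin : i = n
        · exact Or.inl hin
        · exact Or.inr ⟨⟨h1, by omega⟩, (key i h1 (by omega)).1 h3⟩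
      · rintro (rfl | ⟨⟨h1, h2⟩, h3⟩)
        · exact ⟨⟨hc.1, by omega⟩, (hlast hc.1).2 hc.2⟩
        · exact ⟨⟨h1, by omega⟩, (key i h1 h2).2 h3⟩
    have hnT : n ∉ (Finset.Ico 1 n).filter
        (fun i => entry (invWord n l) (i + 1) < entry (invWord n l) i) := by
      simp only [Finset.mem_filter, Finset.mem_Ico]
      rintro ⟨⟨_, h⟩, _⟩
      omega
    rw [bx_des_card (n + 1) (invWord (n + 1) (insertMax n p l)), hT',
        Finset.card_insert_of_notMem hnT, bx_des_card n (invWord n l)]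
  · rw [if_neg hc, Nat.add_zero]
    have hT' : (Finset.Ico 1 (n + 1)).filter
          (fun i => entry (invWord (n + 1) (insertMax n p l)) (i + 1)
            < entry (invWord (n + 1) (insertMax n p l)) i)
        = (Finset.Ico 1 n).filter
            (fun i => entry (invWord n l) (i + 1) < entry (invWord n l) i) := by
      ext i
      simp only [Finset.mem_filter, Finset.mem_Ico]
      constructor
      · rintro ⟨⟨h1, h2⟩, h3⟩
        by_cases hin : i = n
        · subst hin
          exact absurd ⟨h1, (hlast h1).1 h3⟩ hc
        · exact ⟨⟨h1, by omega⟩, (key i h1 (by omega)).1 h3⟩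
      · rintro ⟨⟨h1, h2⟩, h3⟩
        exact ⟨⟨h1, by omega⟩, (key i h1 h2).2 h3⟩
    rw [bx_des_card (n + 1) (invWord (n + 1) (insertMax n p l)), hT',
        ← bx_des_card n (invWord n l)]
    omega

lemma bx_key {n p : ℕ} {l : List ℕ} (hl : IsPermWord n l)
    (hins : IsBaxter (n + 1) (insertMax n p l))
    (hp1 : 1 ≤ p) (hpn : p ≤ n) :
    (2 ≤ p ∧ entry l p < entry l (p - 1)) ↔ pos l n < p := by
  have hp2 : p ≤ n + 1 := by omega
  have hn1 : 1 ≤ n := le_trans hp1 hpn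
  obtain ⟨hq, hq1, hq2⟩ := bx_entry_pos hl n hn1 le_rfl
  constructor
  · rintro ⟨h2, hd⟩
    by_contra hqp
    push_neg at hqp
    have hne : pos l n ≠ p := by
      intro h
      rw [h] at hq
      have := (bx_entry_bound hl (p - 1) (by omega) (by omega)).2
      omega
    have hq3 : p + 1 ≤ pos l n := by omega
    refine hins.2.2 ⟨p - 1, p, pos l n + 1, by omega, by omega, by omega, by omega, ?_, ?_, ?_⟩
    · rw [bx_entryL_gt hl hp1 hp2 (p + 1) (by omega) (by omega),
          bx_entryL_lt hl hp2 (p - 1) (by omega) (by omega),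
          show p + 1 - 1 = p from by omega]
      exact hd
    · rw [bx_entryL_lt hl hp2 (p - 1) (by omega) (by omega),
          bx_entryL_gt hl hp1 hp2 (pos l n + 1) (by omega) (by omega),
          show pos l n + 1 - 1 = pos l n from by omega, hq]
      have h5 := (bx_entry_bound hl (p - 1) (by omega) (by omega)).2
      have h6 := bx_entry_inj hl (p - 1) (pos l n) (by omega) (by omega) hq1 hq2 (by omega)
      rw [hq] at h6
      omega
    · rw [bx_entryL_gt hl hp1 hp2 (pos l n + 1) (by omega) (by omega),
          bx_entryL_self hl hp1 hp2,
          show pos l n + 1 - 1 = pos l n from by omega, hq]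
      omega
  · intro hqp
    have h2 : 2 ≤ p := by omega
    refine ⟨h2, ?_⟩
    have hne : entry l p ≠ entry l (p - 1) :=
      bx_entry_inj hl p (p - 1) hp1 hpn (by omega) (by omega) (by omega)
    rcases Nat.lt_or_ge (entry l p) (entry l (p - 1)) with h | h
    · exact h
    · exfalso
      have h' : entry l (p - 1) < entry l p := by omega
      have hne2 : pos l n ≠ p - 1 := by
        intro hh
        rw [hh] at hq
        have := (bx_entry_bound hl p hp1 hpn).2
        omega
      have hq3 : pos l n ≤ p - 2 := by omega
      refine hins.2.1 ⟨pos l n, p - 1, p + 1, hq1, by omega, by omega, by omega, ?_, ?_, ?_⟩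
      · rw [bx_entryL_lt hl hp2 (p - 1) (by omega) (by omega),
            bx_entryL_gt hl hp1 hp2 (p + 1) (by omega) (by omega),
            show p + 1 - 1 = p from by omega]
        exact h'
      · rw [bx_entryL_gt hl hp1 hp2 (p + 1) (by omega) (by omega),
            bx_entryL_lt hl hp2 (pos l n) hq1 (by omega),
            show p + 1 - 1 = p from by omega, hq]
        have h5 := (bx_entry_bound hl p hp1 hpn).2
        have h6 := bx_entry_inj hl p (pos l n) hp1 hpn hq1 hq2 (by omega)
        rw [hq] at h6
        omega
      · rw [show p - 1 + 1 = p from by omega,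
            bx_entryL_lt hl hp2 (pos l n) hq1 (by omega),
            bx_entryL_self hl hp1 hp2, hq]
        omega

/-- Inserting a new largest label into a Baxter permutation so that the result
is Baxter preserves the difference between the number of descents and inverse descents;
more precisely, inserting to the left of a left-to-right maximum increases both `des` and
`ides` by one, and inserting to the right of a right-to-left maximum changes neither. -/
theorem baxter_insertMax_des_ides (n : ℕ) (l : List ℕ) (hl : IsBaxter n l)
    (p : ℕ) (hp1 : 1 ≤ p) (hp2 : p ≤ n + 1)
    (hins : IsBaxter (n + 1) (insertMax n p l)) :
    ((des (n + 1) (insertMax n p l) : ℤ)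
        - des (n + 1) (invWord (n + 1) (insertMax n p l))
      = (des n l : ℤ) - des n (invWord n l)) ∧
    (p ≤ n → LRMaxAt l p →
      des (n + 1) (insertMax n p l) = des n l + 1 ∧
      des (n + 1) (invWord (n + 1) (insertMax n p l)) = des n (invWord n l) + 1) ∧
    (2 ≤ p → RLMaxAt n l (p - 1) →
      des (n + 1) (insertMax n p l) = des n l ∧
      des (n + 1) (invWord (n + 1) (insertMax n p l)) = des n (invWord n l)) := by
  have hl1 := hl.1
  have hL1 := hins.1
  have hdes := bx_desL hl1 hp1 hp2
  have hides := bx_idesL hl1 hL1 hp1 hp2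
  refine ⟨?_, ?_, ?_⟩
  · by_cases hpn : p ≤ n
    · have hkey := bx_key hl1 hins hp1 hpn
      have hn1 : 1 ≤ n := le_trans hp1 hpn
      obtain ⟨-, hq1, hq2⟩ := bx_entry_pos hl1 n hn1 le_rfl
      by_cases hc : 2 ≤ p ∧ entry l p < entry l (p - 1)
      · have hq : pos l n < p := hkey.1 hc
        rw [if_pos (show 2 ≤ p ∧ p ≤ n ∧ entry l p < entry l (p - 1) from ⟨hc.1, hpn, hc.2⟩),
            if_pos hpn] at hdes
        rw [if_neg (show ¬(1 ≤ n ∧ p ≤ pos l n) from by omega)] at hides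
        omega
      · have hq : ¬ pos l n < p := fun h => hc (hkey.2 h)
        rw [if_neg (show ¬(2 ≤ p ∧ p ≤ n ∧ entry l p < entry l (p - 1)) from
              fun hh => hc ⟨hh.1, hh.2.2⟩),
            if_pos hpn] at hdes
        rw [if_pos (show 1 ≤ n ∧ p ≤ pos l n from ⟨hn1, by omega⟩)] at hides
        omega
    · rw [if_neg (show ¬(2 ≤ p ∧ p ≤ n ∧ entry l p < entry l (p - 1)) from
            fun hh => hpn hh.2.1),
          if_neg hpn] at hdes
      have hni : ¬(1 ≤ n ∧ p ≤ pos l n) := by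
        rintro ⟨hn1, hp⟩
        have := (bx_entry_pos hl1 n hn1 le_rfl).2.2
        omega
      rw [if_neg hni] at hides
      omega
  · rintro hpn hmax
    have hn1 : 1 ≤ n := le_trans hp1 hpn
    constructor
    · have hni : ¬(2 ≤ p ∧ p ≤ n ∧ entry l p < entry l (p - 1)) := by
        rintro ⟨h2, -, hd⟩
        have h5 := hmax (p - 1) (by omega) (by omega)
        omega
      rw [if_neg hni, if_pos hpn] at hdes
      omega
    · obtain ⟨hq, hq1, hq2⟩ := bx_entry_pos hl1 n hn1 le_rfl
      have hple : p ≤ pos l n := by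
        by_contra hlt
        push_neg at hlt
        have h5 := hmax (pos l n) hq1 hlt
        rw [hq] at h5
        have := (bx_entry_bound hl1 p hp1 hpn).2
        omega
      rw [if_pos (show 1 ≤ n ∧ p ≤ pos l n from ⟨hn1, hple⟩)] at hides
      omega
  · rintro hp2' hmax
    have hn1 : 1 ≤ n := by omega
    obtain ⟨hq, hq1, hq2⟩ := bx_entry_pos hl1 n hn1 le_rfl
    have hqlt : pos l n ≤ p - 1 := by
      by_contra h
      push_neg at h
      have h5 := hmax (pos l n) (by omega) hq2
      rw [hq] at h5
      have := (bx_entry_bound hl1 (p - 1) (by omega) (by omega)).2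
      omega
    constructor
    · by_cases hpn : p ≤ n
      · have hd : entry l p < entry l (p - 1) := hmax p (by omega) hpn
        rw [if_pos (show 2 ≤ p ∧ p ≤ n ∧ entry l p < entry l (p - 1) from ⟨hp2', hpn, hd⟩),
            if_pos hpn] at hdes
        omega
      · rw [if_neg (show ¬(2 ≤ p ∧ p ≤ n ∧ entry l p < entry l (p - 1)) from
              fun hh => hpn hh.2.1),
            if_neg hpn] at hdes
        omega
    · rw [if_neg (show ¬(1 ≤ n ∧ p ≤ pos l n) from by omega)] at hides
      omega
end

section
/- If w is a Baxter permutation of length n, then its inverse w⁻¹ is also a Baxter permutation. -/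
section
variable {n : ℕ} {l : List ℕ}

lemma pw_length (hp : IsPermWord n l) : l.length = n := by
  simpa using hp.length_eq

lemma pw_nodup (hp : IsPermWord n l) : l.Nodup :=
  hp.nodup_iff.mpr (List.nodup_range' (s := 1) (n := n))

lemma pw_mem (hp : IsPermWord n l) {v : ℕ} : v ∈ l ↔ 1 ≤ v ∧ v ≤ n := by
  rw [hp.mem_iff, List.mem_range'_1]; omega

lemma entry_eq_getElem (hp : IsPermWord n l) {i : ℕ} (h1 : 1 ≤ i) (h2 : i ≤ n) :
    entry l i = l[i-1]'(by rw [pw_length hp]; omega) := by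
  exact List.getD_eq_getElem l 0 _

lemma entry_mem (hp : IsPermWord n l) {i : ℕ} (h1 : 1 ≤ i) (h2 : i ≤ n) :
    entry l i ∈ l := by
  rw [entry_eq_getElem hp h1 h2]; exact List.getElem_mem _

lemma entry_range (hp : IsPermWord n l) {i : ℕ} (h1 : 1 ≤ i) (h2 : i ≤ n) :
    1 ≤ entry l i ∧ entry l i ≤ n :=
  (pw_mem hp).mp (entry_mem hp h1 h2)

lemma pos_range (hp : IsPermWord n l) {v : ℕ} (hv : v ∈ l) :
    1 ≤ pos l v ∧ pos l v ≤ n := by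
  have := List.idxOf_lt_length_iff.mpr hv
  unfold pos; rw [pw_length hp] at this; omega

lemma entry_pos (hv : v ∈ l) : entry l (pos l v) = v := by
  have h := List.idxOf_lt_length_iff.mpr hv
  unfold entry pos
  simp only [Nat.add_sub_cancel]
  rw [List.getD_eq_getElem l 0 h]
  exact List.getElem_idxOf h

lemma pos_entry (hp : IsPermWord n l) {i : ℕ} (h1 : 1 ≤ i) (h2 : i ≤ n) :
    pos l (entry l i) = i := by
  rw [entry_eq_getElem hp h1 h2]
  unfold pos
  rw [List.Nodup.idxOf_getElem (pw_nodup hp)]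
  omega

lemma entry_inj (hp : IsPermWord n l) {i j : ℕ} (h1 : 1 ≤ i) (h2 : i ≤ n)
    (h3 : 1 ≤ j) (h4 : j ≤ n) (h : entry l i = entry l j) : i = j := by
  have := pos_entry hp h1 h2
  rw [h, pos_entry hp h3 h4] at this
  omega

lemma inv_entry {v : ℕ} (h1 : 1 ≤ v) (h2 : v ≤ n) :
    entry (invWord n l) v = pos l v := by
  unfold entry invWord
  have hlen : ((List.range' 1 n).map (pos l)).length = n := by simp
  rw [List.getD_eq_getElem _ 0 (by rw [hlen]; omega)]
  rw [List.getElem_map, List.getElem_range'_1]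
  congr 1; omega

lemma inv_perm (hp : IsPermWord n l) : IsPermWord n (invWord n l) := by
  unfold IsPermWord invWord
  rw [List.perm_ext_iff_of_nodup _ (List.nodup_range' (s := 1) (n := n))]
  · intro a
    simp only [List.mem_map]
    constructor
    · rintro ⟨v, hv, rfl⟩
      rw [List.mem_range'_1] at hv ⊢
      have := pos_range hp ((pw_mem hp).mpr ⟨hv.1, by omega⟩)
      omega
    · intro ha
      rw [List.mem_range'_1] at ha
      refine ⟨entry l a, ?_, pos_entry hp (by omega) (by omega)⟩
      rw [List.mem_range'_1]
      have := entry_range hp (i := a) (by omega) (by omega)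
      omega
  · refine List.Nodup.map_on ?_ (List.nodup_range' (s := 1) (n := n))
    intro x hx y hy hxy
    rw [List.mem_range'_1] at hx hy
    have := entry_pos (l := l) ((pw_mem hp).mpr (by omega : 1 ≤ x ∧ x ≤ n))
    have := entry_pos (l := l) ((pw_mem hp).mpr (by omega : 1 ≤ y ∧ y ≤ n))
    rw [hxy] at *
    omega

lemma crossing_down (f : ℕ → ℕ) (m : ℕ) :
    ∀ d b c, c - b = d → b ≤ c → (∀ q, b ≤ q → q ≤ c → f q ≠ m ∧ f q ≠ m + 1) →
    m + 1 < f b → f c < m →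
    ∃ p, b ≤ p ∧ p + 1 ≤ c ∧ m + 1 < f p ∧ f (p + 1) < m := by
  intro d
  induction d with
  | zero =>
    intro b c hd hbc _ hb hc
    have : b = c := by omega
    subst this; omega
  | succ d ih =>
    intro b c hd hbc hmid hb hc
    by_cases h : f (b + 1) < m
    · exact ⟨b, le_refl _, by omega, hb, h⟩
    · have hne := hmid (b + 1) (by omega) (by omega)
      have hgt : m + 1 < f (b + 1) := by omega
      obtain ⟨p, hp1, hp2, hp3, hp4⟩ :=
        ih (b + 1) c (by omega) (by omega) (fun q hq1 hq2 => hmid q (by omega) hq2) hgt hc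
      exact ⟨p, by omega, hp2, hp3, hp4⟩

lemma crossing_up (f : ℕ → ℕ) (m : ℕ) :
    ∀ d b c, c - b = d → b ≤ c → (∀ q, b ≤ q → q ≤ c → f q ≠ m ∧ f q ≠ m + 1) →
    f b < m → m + 1 < f c →
    ∃ p, b ≤ p ∧ p + 1 ≤ c ∧ f p < m ∧ m + 1 < f (p + 1) := by
  intro d
  induction d with
  | zero =>
    intro b c hd hbc _ hb hc
    have : b = c := by omega
    subst this; omega
  | succ d ih =>
    intro b c hd hbc hmid hb hc
    by_cases h : m + 1 < f (b + 1)
    · exact ⟨b, le_refl _, by omega, hb, h⟩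
    · have hne := hmid (b + 1) (by omega) (by omega)
      have hlt : f (b + 1) < m := by omega
      obtain ⟨p, hp1, hp2, hp3, hp4⟩ :=
        ih (b + 1) c (by omega) (by omega) (fun q hq1 hq2 => hmid q (by omega) hq2) hlt hc
      exact ⟨p, by omega, hp2, hp3, hp4⟩

end

/-- The inverse of a Baxter permutation is a Baxter permutation. -/
theorem baxter_inv (n : ℕ) (l : List ℕ) (hl : IsBaxter n l) :
    IsBaxter n (invWord n l) := by
  obtain ⟨hp, h3142, h2413⟩ := hl
  refine ⟨inv_perm hp, ?_, ?_⟩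
  · rintro ⟨i, j, k, hi1, hij, hjk, hkn, e1, e2, e3⟩
    have hin : i ≤ n := by omega
    have hj1 : 1 ≤ j := by omega
    have hjn : j + 1 ≤ n := by omega
    have hk1 : 1 ≤ k := by omega
    rw [inv_entry hj1 (by omega), inv_entry hk1 hkn] at e1
    rw [inv_entry hk1 hkn, inv_entry hi1 hin] at e2
    rw [inv_entry hi1 hin, inv_entry (by omega : 1 ≤ j + 1) hjn] at e3
    have hjm : j ∈ l := (pw_mem hp).mpr ⟨hj1, by omega⟩
    have hj1m : j + 1 ∈ l := (pw_mem hp).mpr ⟨by omega, hjn⟩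
    have him : i ∈ l := (pw_mem hp).mpr ⟨hi1, hin⟩
    have hkm : k ∈ l := (pw_mem hp).mpr ⟨hk1, hkn⟩
    have ea : entry l (pos l j) = j := entry_pos hjm
    have eb : entry l (pos l k) = k := entry_pos hkm
    have ec : entry l (pos l i) = i := entry_pos him
    have ed : entry l (pos l (j + 1)) = j + 1 := entry_pos hj1m
    have ra := pos_range hp hjm
    have rb := pos_range hp hkm
    have rc := pos_range hp him
    have rd := pos_range hp hj1m
    have hmid : ∀ q, pos l k ≤ q → q ≤ pos l i →
        entry l q ≠ j ∧ entry l q ≠ j + 1 := by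
      intro q hq1 hq2
      constructor
      · intro hq
        have : q = pos l j := by
          refine entry_inj hp (by omega) (by omega) ra.1 ra.2 ?_
          rw [hq, ea]
        omega
      · intro hq
        have : q = pos l (j + 1) := by
          refine entry_inj hp (by omega) (by omega) rd.1 rd.2 ?_
          rw [hq, ed]
        omega
    obtain ⟨p, hp1, hp2, hp3, hp4⟩ :=
      crossing_down (entry l) j (pos l i - pos l k) (pos l k) (pos l i) rfl
        (by omega) hmid (by omega) (by omega)
    exact h2413 ⟨pos l j, p, pos l (j + 1), by omega, by omega, by omega, by omega,
      by omega, by omega, by omega⟩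
  · rintro ⟨i, j, k, hi1, hij, hjk, hkn, e1, e2, e3⟩
    have hin : i ≤ n := by omega
    have hj1 : 1 ≤ j := by omega
    have hjn : j + 1 ≤ n := by omega
    have hk1 : 1 ≤ k := by omega
    rw [inv_entry (by omega : 1 ≤ j + 1) hjn, inv_entry hi1 hin] at e1
    rw [inv_entry hi1 hin, inv_entry hk1 hkn] at e2
    rw [inv_entry hk1 hkn, inv_entry hj1 (by omega)] at e3
    have hjm : j ∈ l := (pw_mem hp).mpr ⟨hj1, by omega⟩
    have hj1m : j + 1 ∈ l := (pw_mem hp).mpr ⟨by omega, hjn⟩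
    have him : i ∈ l := (pw_mem hp).mpr ⟨hi1, hin⟩
    have hkm : k ∈ l := (pw_mem hp).mpr ⟨hk1, hkn⟩
    have ea : entry l (pos l (j + 1)) = j + 1 := entry_pos hj1m
    have eb : entry l (pos l i) = i := entry_pos him
    have ec : entry l (pos l k) = k := entry_pos hkm
    have ed : entry l (pos l j) = j := entry_pos hjm
    have ra := pos_range hp hj1m
    have rb := pos_range hp him
    have rc := pos_range hp hkm
    have rd := pos_range hp hjm
    have hmid : ∀ q, pos l i ≤ q → q ≤ pos l k →
        entry l q ≠ j ∧ entry l q ≠ j + 1 := by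
      intro q hq1 hq2
      constructor
      · intro hq
        have : q = pos l j := by
          refine entry_inj hp (by omega) (by omega) rd.1 rd.2 ?_
          rw [hq, ed]
        omega
      · intro hq
        have : q = pos l (j + 1) := by
          refine entry_inj hp (by omega) (by omega) ra.1 ra.2 ?_
          rw [hq, ea]
        omega
    obtain ⟨p, hp1, hp2, hp3, hp4⟩ :=
      crossing_up (entry l) j (pos l k - pos l i) (pos l i) (pos l k) rfl
        (by omega) hmid (by omega) (by omega)
    exact h3142 ⟨pos l (j + 1), p, pos l j, by omega, by omega, by omega, by omega,
      by omega, by omega, by omega⟩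
end
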